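/- Let c : ℤ² → A be a non-periodic configuration with values in a finite alphabet A. Then there exists a partition of A into two nonempty classes such that the induced two-letter configuration c' : ℤ² → {0,1} (mapping positions by which class their symbol lies in) is still non-periodic; moreover, for every finite D ⊆ ℤ², the D-pattern complexity satisfies P_{c'}(D) ≤ P_c(D). -/

import Mathlib

namespace Aux19

def per {X : Type*} (f : ℤ × ℤ → X) (t : ℤ × ℤ) : Prop := ∀ u, f (u + t) = f u

lemma per_add {X : Type*} {f : ℤ × ℤ → X} {s t : ℤ × ℤ} (hs : per f s) (ht : per f t) :
    per f (s + t) := by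
  intro u
  have : u + (s + t) = (u + t) + s := by ring
  rw [this, hs, ht]

lemma per_zero {X : Type*} (f : ℤ × ℤ → X) : per f 0 := by intro u; simp

lemma per_neg {X : Type*} {f : ℤ × ℤ → X} {t : ℤ × ℤ} (ht : per f t) : per f (-t) := by
  intro u
  have := ht (u + -t)
  simpa using this.symm

lemma per_zsmul {X : Type*} {f : ℤ × ℤ → X} {t : ℤ × ℤ} (ht : per f t) (n : ℤ) :
    per f (n • t) := by
  induction n using Int.induction_on with
  | zero => simpa using per_zero f
  | succ i ih =>
      have : ((i : ℤ) + 1) • t = (i : ℤ) • t + t := by rw [add_smul, one_smul]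
      rw [this]; exact per_add ih ht
  | pred i ih =>
      have : (-(i : ℤ) - 1) • t = (-(i : ℤ)) • t + -t := by
        rw [sub_smul, one_smul]; ring_nf
      rw [this]; exact per_add ih (per_neg ht)

lemma per_comb {X : Type*} {f : ℤ × ℤ → X} {u v : ℤ × ℤ} (hu : per f u) (hv : per f v)
    (p q : ℤ) : per f (p • u + q • v) :=
  per_add (per_zsmul hu p) (per_zsmul hv q)

def cross (s t : ℤ × ℤ) : ℤ := s.1 * t.2 - s.2 * t.1

lemma cross_self (s : ℤ × ℤ) : cross s s = 0 := by simp [cross]; ring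

lemma smul_fst (m : ℤ) (s : ℤ × ℤ) : (m • s).1 = m * s.1 := rfl
lemma smul_snd (m : ℤ) (s : ℤ × ℤ) : (m • s).2 = m * s.2 := rfl

lemma cross_smul_left (m : ℤ) (s w : ℤ × ℤ) : cross (m • s) w = m * cross s w := by
  simp [cross, smul_fst, smul_snd]; ring

lemma smul_ne_zero' {m : ℤ} {w : ℤ × ℤ} (hm : m ≠ 0) (hw : w ≠ 0) : m • w ≠ 0 := by
  intro h
  apply hw
  have h1 : m * w.1 = 0 := congrArg Prod.fst h
  have h2 : m * w.2 = 0 := congrArg Prod.snd h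
  have : w.1 = 0 := by rcases mul_eq_zero.1 h1 with h | h; exact absurd h hm; exact h
  have : w.2 = 0 := by rcases mul_eq_zero.1 h2 with h | h; exact absurd h hm; assumption
  ext <;> simp_all

/-- parallel nonzero integer vectors have a common nonzero multiple -/
lemma L1 {u v : ℤ × ℤ} (hu : u ≠ 0) (hv : v ≠ 0) (hc : cross u v = 0) :
    ∃ m n : ℤ, m ≠ 0 ∧ n ≠ 0 ∧ m • u = n • v := by
  unfold cross at hc
  by_cases hv1 : v.1 ≠ 0
  · refine ⟨v.1, u.1, hv1, ?_, ?_⟩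
    · intro h1
      apply hu
      have : u.2 * v.1 = 0 := by rw [h1] at hc; linarith
      have hu2 : u.2 = 0 := by rcases mul_eq_zero.1 this with h | h; exact h; exact absurd h hv1
      ext <;> simp [h1, hu2]
    · ext
      · simp [smul_fst]; ring
      · simp [smul_snd]; nlinarith [hc]
  · push_neg at hv1
    have hv2 : v.2 ≠ 0 := by
      intro h2; apply hv; ext <;> simp [hv1, h2]
    refine ⟨v.2, u.2, hv2, ?_, ?_⟩
    · intro h2
      apply hu
      have hu1 : u.1 = 0 := by
        have h3 : u.1 * v.2 = 0 := by rw [h2] at hc; linarith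
        rcases mul_eq_zero.1 h3 with h | h; exact h; exact absurd h hv2
      ext <;> simp [hu1, h2]
    · ext
      · simp [smul_fst]; nlinarith [hc]
      · simp [smul_snd]; ring

/-- two independent vectors rationally span everything -/
lemma L2 {s₁ s₂ : ℤ × ℤ} (hc : cross s₁ s₂ ≠ 0) (w : ℤ × ℤ) :
    ∃ k p q : ℤ, k ≠ 0 ∧ k • w = p • s₁ + q • s₂ := by
  refine ⟨cross s₁ s₂, cross w s₂, cross s₁ w, hc, ?_⟩
  ext
  · show cross s₁ s₂ * w.1 = cross w s₂ * s₁.1 + cross s₁ w * s₂.1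
    unfold cross; ring
  · show cross s₁ s₂ * w.2 = cross w s₂ * s₁.2 + cross s₁ w * s₂.2
    unfold cross; ring

lemma L3 {u v : ℤ × ℤ} (hc : cross u v ≠ 0) (t : ℤ × ℤ) :
    ∃ m p q : ℤ, 0 < m ∧ m • t = p • u + q • v := by
  obtain ⟨k, p, q, hk, heq⟩ := L2 hc t
  rcases lt_trichotomy k 0 with h | h | h
  · refine ⟨-k, -p, -q, by omega, ?_⟩
    rw [neg_smul, neg_smul, neg_smul, heq]; ring
  · exact absurd h hk
  · exact ⟨k, p, q, h, heq⟩

end Aux19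
namespace Aux19

/-- if f,g disjoint, h = f ∨ g, and s is a period of h and of f, it is one of g. -/
lemma per_diff {f g h : ℤ × ℤ → Bool} (hun : ∀ y, h y = (f y || g y))
    (hdisj : ∀ y, ¬(f y = true ∧ g y = true)) {s : ℤ × ℤ}
    (hh : per h s) (hf : per f s) : per g s := by
  intro u
  have h2 := hf u
  have h1 := hh u
  rw [hun, hun, h2] at h1
  cases hfu : f u with
  | false =>
      rw [hfu] at h1
      simpa using h1
  | true =>
      have hgu : g u = false := by
        cases hg : g u
        · rfl
        · exact ((hdisj u) ⟨hfu, hg⟩).elim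
      have hgs : g (u + s) = false := by
        cases hg : g (u + s)
        · rfl
        · exact ((hdisj (u + s)) ⟨h2.trans hfu, hg⟩).elim
      rw [hgu, hgs]

/-- the averaging lemma -/
lemma avg {f g h : ℤ × ℤ → Bool} (hun : ∀ y, h y = (f y || g y))
    (hdisj : ∀ y, ¬(f y = true ∧ g y = true)) {u v t : ℤ × ℤ}
    (hu : per f u) (hv : per g v) (ht : per h t) (hcr : cross u v ≠ 0) :
    ∃ m : ℤ, m ≠ 0 ∧ per f (m • t) := by
  obtain ⟨m, p, q, hm, heq⟩ := L3 hcr t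
  refine ⟨m, hm.ne', ?_⟩
  set F : ℤ × ℤ → ℤ := fun y => cond (f y) 1 0 with hF
  set G : ℤ × ℤ → ℤ := fun y => cond (g y) 1 0 with hG
  have hFH : ∀ y, cond (h y) (1 : ℤ) 0 = F y + G y := by
    intro y
    by_cases hfy : f y = true
    · have hgy : g y = false := by
        cases hg : g y
        · rfl
        · exact ((hdisj y) ⟨hfy, hg⟩).elim
      simp [hun y, hfy, hgy, hF, hG]
    · have hfy' : f y = false := by revert hfy; cases f y <;> simp
      simp [hun y, hfy', hF, hG]
  set g2 : ℤ × ℤ → ℤ := fun y => F (y + t) - F y with hg2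
  have hFu : ∀ y, F (y + u) = F y := fun y => by simp [hF, hu y]
  have hGv : ∀ y, G (y + v) = G y := fun y => by simp [hG, hv y]
  have hHt : ∀ y, cond (h (y + t)) (1 : ℤ) 0 = cond (h y) 1 0 := fun y => by rw [ht y]
  have halt : ∀ y, g2 y = G y - G (y + t) := by
    intro y
    have h1 := hFH y
    have h2 := hFH (y + t)
    have h3 := hHt y
    simp only [hg2]
    omega
  have hg2u : per g2 u := by
    intro y
    simp only [hg2]
    have e : y + u + t = (y + t) + u := by ring
    rw [e, hFu, hFu]
  have hg2v : per g2 v := by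
    intro y
    rw [halt, halt]
    have e : y + v + t = (y + t) + v := by ring
    rw [e, hGv, hGv]
  have hg2m : ∀ y, g2 (y + m • t) = g2 y := by
    intro y
    rw [heq]
    exact per_comb hg2u hg2v p q y
  have hFb : ∀ y, F y = 0 ∨ F y = 1 := by
    intro y; cases hfy : f y <;> simp [hF, hfy]
  intro x
  set mn : ℕ := m.toNat with hmn
  have hmc : (mn : ℤ) = m := Int.toNat_of_nonneg hm.le
  have tel : ∀ N : ℕ,
      (∑ k ∈ Finset.range N, g2 (x + (k : ℤ) • t)) = F (x + (N : ℤ) • t) - F x := by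
    intro N
    induction N with
    | zero => simp
    | succ N ih =>
        rw [Finset.sum_range_succ, ih]
        have e : x + ((N + 1 : ℕ) : ℤ) • t = (x + (N : ℤ) • t) + t := by
          push_cast
          rw [add_smul, one_smul]
          ring
        rw [e]
        simp only [hg2]
        ring
  have hshift : ∀ k : ℕ, g2 (x + ((mn + k : ℕ) : ℤ) • t) = g2 (x + (k : ℤ) • t) := by
    intro k
    have e : x + ((mn + k : ℕ) : ℤ) • t = (x + (k : ℤ) • t) + m • t := by
      push_cast [hmc]
      rw [add_smul]
      ring
    rw [e, hg2m]
  have hdouble : (∑ k ∈ Finset.range (mn + mn), g2 (x + (k : ℤ) • t))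
      = 2 * ∑ k ∈ Finset.range mn, g2 (x + (k : ℤ) • t) := by
    rw [Finset.sum_range_add]
    have e2 : (∑ k ∈ Finset.range mn, g2 (x + ((mn + k : ℕ) : ℤ) • t))
        = ∑ k ∈ Finset.range mn, g2 (x + (k : ℤ) • t) :=
      Finset.sum_congr rfl fun k _ => hshift k
    rw [e2]
    ring
  have hb2 := tel (mn + mn)
  have hb1 := tel mn
  rw [hdouble] at hb2
  have hz : (∑ k ∈ Finset.range mn, g2 (x + (k : ℤ) • t)) = 0 := by
    rcases hFb (x + ((mn + mn : ℕ) : ℤ) • t) with h1 | h1 <;>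
      rcases hFb x with h2 | h2 <;> omega
  rw [hz, hmc] at hb1
  have hFeq : F (x + m • t) = F x := by omega
  have hFval : ∀ y b, f y = b → F y = cond b 1 0 := by
    intro y b hb; simp [hF, hb]
  cases hf1 : f (x + m • t) with
  | false =>
      cases hf2 : f x with
      | false => rfl
      | true => exfalso; rw [hFval _ _ hf1, hFval _ _ hf2] at hFeq; simp at hFeq
  | true =>
      cases hf2 : f x with
      | false => exfalso; rw [hFval _ _ hf1, hFval _ _ hf2] at hFeq; simp at hFeq
      | true => rfl

end Aux19
namespace Aux19

lemma key {A : Type} [Fintype A] (c : ℤ × ℤ → A)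
    (hnp : ¬ ∃ t : ℤ × ℤ, t ≠ 0 ∧ ∀ u, c (u + t) = c u) :
    ∃ π : A → Bool, Function.Surjective π ∧
      ¬ ∃ t : ℤ × ℤ, t ≠ 0 ∧ ∀ u, (π ∘ c) (u + t) = (π ∘ c) u := by
  classical
  by_contra hcon
  push_neg at hcon
  by_cases hsub : ∀ x y : A, x = y
  · exact hnp ⟨(1, 0), by intro h; exact one_ne_zero (congrArg Prod.fst h),
      fun u => hsub _ _⟩
  push_neg at hsub
  obtain ⟨x₀, y₀, hxy⟩ := hsub
  set χ : A → A → Bool := fun a z => decide (z = a) with hχ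
  have hχsurj : ∀ a, Function.Surjective (χ a) := by
    intro a b
    have hb : ∃ z : A, z ≠ a := by
      by_cases hx : x₀ = a
      · exact ⟨y₀, fun h => hxy (hx.trans h.symm)⟩
      · exact ⟨x₀, hx⟩
    obtain ⟨z, hz⟩ := hb
    cases b with
    | false => exact ⟨z, by simp [hχ, hz]⟩
    | true => exact ⟨a, by simp [hχ]⟩
  have hta : ∀ a, ∃ t : ℤ × ℤ, t ≠ 0 ∧ per (fun u => χ a (c u)) t := by
    intro a
    obtain ⟨t, ht0, htp⟩ := hcon (χ a) (hχsurj a)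
    exact ⟨t, ht0, fun u => htp u⟩
  choose T hT0 hTper using hta
  set Rk : A → Prop := fun a => ∃ s₁ s₂ : ℤ × ℤ, per (fun u => χ a (c u)) s₁ ∧
    per (fun u => χ a (c u)) s₂ ∧ cross s₁ s₂ ≠ 0 with hRk
  by_cases hcase : ∃ a b, ¬Rk a ∧ ¬Rk b ∧ cross (T a) (T b) ≠ 0
  · -- hard case: two letters with independent rank-one period groups
    obtain ⟨a, b, hRa, hRb, hcr⟩ := hcase
    have hab : a ≠ b := by
      intro he
      subst he
      exact hcr (cross_self (T a))
    have hRa' : ∀ s₁ s₂, per (fun u => χ a (c u)) s₁ → per (fun u => χ a (c u)) s₂ →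
        cross s₁ s₂ = 0 := by
      intro s₁ s₂ hh₁ hh₂
      by_contra hne
      exact hRa ⟨s₁, s₂, hh₁, hh₂, hne⟩
    have hRb' : ∀ s₁ s₂, per (fun u => χ b (c u)) s₁ → per (fun u => χ b (c u)) s₂ →
        cross s₁ s₂ = 0 := by
      intro s₁ s₂ hh₁ hh₂
      by_contra hne
      exact hRb ⟨s₁, s₂, hh₁, hh₂, hne⟩
    set χab : A → Bool := fun z => χ a z || χ b z with hχab
    have hdisj : ∀ y, ¬((fun u => χ a (c u)) y = true ∧ (fun u => χ b (c u)) y = true) := by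
      intro y hy
      obtain ⟨hy1, hy2⟩ := hy
      simp only [hχ, decide_eq_true_eq] at hy1 hy2
      rw [hy1] at hy2
      exact hab hy2
    have hun : ∀ y, (fun u => χab (c u)) y =
        ((fun u => χ a (c u)) y || (fun u => χ b (c u)) y) := fun y => rfl
    obtain ⟨t, ht0, htper⟩ : ∃ t : ℤ × ℤ, t ≠ 0 ∧ per (fun u => χab (c u)) t := by
      by_cases hex : ∃ z : A, z ≠ a ∧ z ≠ b
      · have hsurj : Function.Surjective χab := by
          intro bb
          cases bb with
          | true => exact ⟨a, by simp [hχab, hχ]⟩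
          | false =>
              obtain ⟨z, hza, hzb⟩ := hex
              exact ⟨z, by simp [hχab, hχ, hza, hzb]⟩
        obtain ⟨t, ht0, htp⟩ := hcon χab hsurj
        exact ⟨t, ht0, fun u => htp u⟩
      · exfalso
        push_neg at hex
        have hpb : per (fun u => χ b (c u)) (T a) := by
          intro u
          have h1 := hTper a u
          simp only [hχ, decide_eq_decide] at h1 ⊢
          rcases eq_or_ne (c (u + T a)) a with h | h
          · rcases eq_or_ne (c u) a with h' | h'
            · rw [h, h']
            · exact absurd (h1.mp h) h'
          · rcases eq_or_ne (c u) a with h' | h'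
            · exact absurd (h1.mpr h') h
            · rw [hex _ h, hex _ h']
        exact hRb ⟨T a, T b, hpb, hTper b, hcr⟩
    by_cases h1 : cross t (T a) = 0
    · obtain ⟨mm, nn, hm0, hn0, hmn⟩ := L1 ht0 (hT0 a) h1
      have hsab : per (fun u => χab (c u)) (mm • t) := per_zsmul htper mm
      have hsa : per (fun u => χ a (c u)) (mm • t) := by
        rw [hmn]; exact per_zsmul (hTper a) nn
      have hsb : per (fun u => χ b (c u)) (mm • t) := per_diff hun hdisj hsab hsa
      have hzero := hRb' (mm • t) (T b) hsb (hTper b)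
      rw [hmn, cross_smul_left] at hzero
      exact (mul_ne_zero hn0 hcr) hzero
    · by_cases h2 : cross t (T b) = 0
      · obtain ⟨mm, nn, hm0, hn0, hmn⟩ := L1 ht0 (hT0 b) h2
        have hsab : per (fun u => χab (c u)) (mm • t) := per_zsmul htper mm
        have hsb : per (fun u => χ b (c u)) (mm • t) := by
          rw [hmn]; exact per_zsmul (hTper b) nn
        have hun' : ∀ y, (fun u => χab (c u)) y =
            ((fun u => χ b (c u)) y || (fun u => χ a (c u)) y) := by
          intro y
          rw [hun y, Bool.or_comm]
        have hdisj' : ∀ y, ¬((fun u => χ b (c u)) y = true ∧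
            (fun u => χ a (c u)) y = true) := fun y hy => hdisj y ⟨hy.2, hy.1⟩
        have hsa : per (fun u => χ a (c u)) (mm • t) := per_diff hun' hdisj' hsab hsb
        have hzero := hRa' (mm • t) (T a) hsa (hTper a)
        rw [hmn, cross_smul_left] at hzero
        have hba : cross (T b) (T a) ≠ 0 := by
          intro hh
          apply hcr
          unfold cross at hh ⊢
          linarith
        exact (mul_ne_zero hn0 hba) hzero
      · obtain ⟨mm, hm0, hp⟩ := avg hun hdisj (hTper a) (hTper b) htper hcr
        have hzero := hRa' (mm • t) (T a) hp (hTper a)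
        rw [cross_smul_left] at hzero
        exact (mul_ne_zero hm0 h1) hzero
  · -- easy case: common period exists
    push_neg at hcase
    obtain ⟨w, hw0, hwpar⟩ : ∃ w : ℤ × ℤ, w ≠ 0 ∧ ∀ a, ¬Rk a → cross w (T a) = 0 := by
      by_cases hA1 : ∃ a₀, ¬Rk a₀
      · obtain ⟨a₀, ha₀⟩ := hA1
        exact ⟨T a₀, hT0 a₀, fun a ha => hcase a₀ a ha₀ ha⟩
      · push_neg at hA1
        exact ⟨(1, 0), by intro h; exact one_ne_zero (congrArg Prod.fst h),
          fun a ha => (ha (hA1 a)).elim⟩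
    have hk : ∀ a, ∃ k : ℤ, k ≠ 0 ∧ per (fun u => χ a (c u)) (k • w) := by
      intro a
      by_cases hRa : Rk a
      · obtain ⟨s₁, s₂, hp₁, hp₂, hc12⟩ := hRa
        obtain ⟨k, p, q, hk0, hkeq⟩ := L2 hc12 w
        refine ⟨k, hk0, ?_⟩
        rw [hkeq]
        exact per_comb hp₁ hp₂ p q
      · obtain ⟨mm, nn, hm0, hn0, hmn⟩ := L1 hw0 (hT0 a) (hwpar a hRa)
        refine ⟨mm, hm0, ?_⟩
        rw [hmn]
        exact per_zsmul (hTper a) nn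
    choose K hK0 hKper using hk
    set Kp : ℤ := ∏ a ∈ Finset.univ, K a with hKp
    have hKp0 : Kp ≠ 0 := Finset.prod_ne_zero_iff.mpr fun a _ => hK0 a
    have hper : ∀ a : A, per (fun u => χ a (c u)) (Kp • w) := by
      intro a
      have he : Kp = (∏ b ∈ Finset.univ.erase a, K b) * K a := by
        rw [hKp, ← Finset.mul_prod_erase Finset.univ K (Finset.mem_univ a), mul_comm]
      rw [he, mul_smul]
      exact per_zsmul (hKper a) _
    apply hnp
    refine ⟨Kp • w, smul_ne_zero' hKp0 hw0, ?_⟩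
    intro u
    have hh := hper (c u) u
    simp only [hχ, decide_eq_decide] at hh
    exact hh.mpr trivial

end Aux19
/-- Letters of a non-periodic configuration over a finite alphabet can be merged
into two classes keeping non-periodicity, without increasing pattern complexity. -/
theorem stmt_19 {A : Type} [Fintype A] (c : ℤ × ℤ → A)
    (hnp : ¬ ∃ t : ℤ × ℤ, t ≠ 0 ∧ ∀ u, c (u + t) = c u) :
    ∃ π : A → Bool, Function.Surjective π ∧
      (¬ ∃ t : ℤ × ℤ, t ≠ 0 ∧ ∀ u, (π ∘ c) (u + t) = (π ∘ c) u) ∧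
      ∀ D : Finset (ℤ × ℤ),
        {p : {u // u ∈ D} → Bool | ∃ v : ℤ × ℤ, ∀ u, p u = π (c (v + u.1))}.ncard ≤
          {p : {u // u ∈ D} → A | ∃ v : ℤ × ℤ, ∀ u, p u = c (v + u.1)}.ncard := by
  classical
  obtain ⟨π, hsurj, hper⟩ := Aux19.key c hnp
  refine ⟨π, hsurj, hper, ?_⟩
  intro D
  set SA : Set ({u // u ∈ D} → A) := {p | ∃ v : ℤ × ℤ, ∀ u, p u = c (v + u.1)} with hSA
  set SB : Set ({u // u ∈ D} → Bool) := {p | ∃ v : ℤ × ℤ, ∀ u, p u = π (c (v + u.1))}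
    with hSB
  have hfin : SA.Finite := Set.toFinite SA
  have hsub : SB ⊆ (fun p => π ∘ p) '' SA := by
    rintro p ⟨v, hv⟩
    refine ⟨fun u => c (v + u.1), ⟨v, fun u => rfl⟩, ?_⟩
    funext u
    exact (hv u).symm
  calc SB.ncard ≤ ((fun p => π ∘ p) '' SA).ncard :=
        Set.ncard_le_ncard hsub (hfin.image _)
    _ ≤ SA.ncard := Set.ncard_image_le hfin
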